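/- Suppose v : [0,∞) → ℝ is C¹, strictly decreasing, with ρ ↦ ρ·v'(ρ) non-increasing. Let y_{N-1} : [0,∞) → (0, R] solve y_{N-1}' = -(y_{N-1}²/ℓ)(v(0) - v(y_{N-1})). Then z(t) := t·y_{N-1}(t)·(v(0) - v(y_{N-1}(t))) satisfies z(t) ≤ ℓ for all t ≥ 0. -/

import Mathlib

/-- Step 0 of the discrete Oleinik estimate: for the leader's discrete density,
`t * y * (v 0 - v y)` never exceeds `ℓ`. -/
theorem discrete_oleinik_leader
    (v : ℝ → ℝ) (ℓ R : ℝ)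
    (hℓ : 0 < ℓ) (hR : 0 < R)
    (hv_smooth : ContDiffOn ℝ 1 v (Set.Ici 0))
    (hv_anti : StrictAntiOn v (Set.Ici 0))
    (hV3 : AntitoneOn (fun ρ => ρ * deriv v ρ) (Set.Ici (0:ℝ)))
    (y : ℝ → ℝ)
    (hbound : ∀ t ≥ (0:ℝ), y t ∈ Set.Ioc (0:ℝ) R)
    (hODE : ∀ t ≥ (0:ℝ),
      HasDerivAt y (-(y t) ^ 2 / ℓ * (v 0 - v (y t))) t) :
    ∀ t ≥ (0:ℝ), t * y t * (v 0 - v (y t)) ≤ ℓ := by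
  have hy_pos : ∀ t ≥ (0:ℝ), 0 < y t := fun t ht => (hbound t ht).1
  have hvle : ∀ t ≥ (0:ℝ), v (y t) ≤ v 0 := by
    intro t ht
    exact hv_anti.antitoneOn (Set.self_mem_Ici) (Set.mem_Ici.mpr (hy_pos t ht).le)
      (hy_pos t ht).le
  -- y is antitone on [0, ∞)
  have hy_anti : AntitoneOn y (Set.Ici 0) := by
    apply antitoneOn_of_deriv_nonpos (convex_Ici 0)
    · exact fun t ht => (hODE t ht).continuousAt.continuousWithinAt
    · intro t ht
      rw [interior_Ici] at ht
      exact (hODE t ht.le).differentiableAt.differentiableWithinAt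
    · intro t ht
      rw [interior_Ici] at ht
      rw [(hODE t ht.le).deriv]
      have h1 : 0 ≤ (y t) ^ 2 / ℓ := div_nonneg (sq_nonneg _) hℓ.le
      have h2 := hvle t ht.le
      have h6 : -y t ^ 2 / ℓ * (v 0 - v (y t)) = -(y t ^ 2 / ℓ * (v 0 - v (y t))) := by
        ring
      rw [h6]
      exact neg_nonpos.mpr (mul_nonneg h1 (sub_nonneg.mpr h2))
  intro T hT
  set C := (v 0 - v (y T)) / ℓ with hC
  -- derivative of the auxiliary function
  have hφ : ∀ t ≥ (0:ℝ), HasDerivAt (fun t => (y t)⁻¹ - t * C)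
      ((v 0 - v (y t)) / ℓ - C) t := by
    intro t ht
    have h1 := ((hODE t ht).inv (hy_pos t ht).ne').sub ((hasDerivAt_id t).mul_const C)
    refine h1.congr_deriv ?_
    have hy := (hy_pos t ht).ne'
    field_simp
  have hmono : MonotoneOn (fun t => (y t)⁻¹ - t * C) (Set.Icc 0 T) := by
    apply monotoneOn_of_deriv_nonneg (convex_Icc 0 T)
    · exact fun t ht => (hφ t ht.1).continuousAt.continuousWithinAt
    · intro t ht
      rw [interior_Icc] at ht
      exact (hφ t ht.1.le).differentiableAt.differentiableWithinAt
    · intro t ht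
      rw [interior_Icc] at ht
      rw [(hφ t ht.1.le).deriv]
      have hyTt : y T ≤ y t :=
        hy_anti (Set.mem_Ici.mpr ht.1.le) (Set.mem_Ici.mpr hT) ht.2.le
      have hvv : v (y t) ≤ v (y T) :=
        hv_anti.antitoneOn (Set.mem_Ici.mpr (hy_pos T hT).le)
          (Set.mem_Ici.mpr (hy_pos t ht.1.le).le) hyTt
      rw [hC, sub_nonneg]
      gcongr
  have key := hmono (Set.left_mem_Icc.mpr hT) (Set.right_mem_Icc.mpr hT) hT
  simp only [zero_mul, sub_zero] at key
  have h0 : 0 < (y 0)⁻¹ := inv_pos.mpr (hy_pos 0 le_rfl)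
  have hTC : T * C ≤ (y T)⁻¹ := by linarith
  rw [hC] at hTC
  have hyT := hy_pos T hT
  have h3 : T * ((v 0 - v (y T)) / ℓ) * (ℓ * y T) ≤ (y T)⁻¹ * (ℓ * y T) :=
    mul_le_mul_of_nonneg_right hTC (by positivity)
  have h4 : (y T)⁻¹ * (ℓ * y T) = ℓ := by field_simp
  have h5 : T * ((v 0 - v (y T)) / ℓ) * (ℓ * y T) = T * y T * (v 0 - v (y T)) := by
    field_simp
  linarith [h3, h4.le, h5.le]
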